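/- (Lemma 1 specialization) In a finite MDP under any fixed strategy, for every starting state s and every strategy σ, with probability 1 the set of states visited infinitely often by the resulting random path is an end component of the MDP: Pr_s^σ({ ω : Inf(ω) ∈ E(G) }) = 1, where E(G) denotes the set of end components of G. -/

import Mathlib

open MeasureTheory
open scoped Classical

/-- The set of states occurring infinitely often along an infinite path. -/
def InfOcc {S : Type*} (ω : ℕ → S) : Set S := {s | {n : ℕ | ω n = s}.Infinite}

/-- Reachability inside a set `U` via edges of `E` staying in `U`. -/
def ReachIn {S : Type*} (E : S → Set S) (U : Set S) (s t : S) : Prop :=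
  Relation.ReflTransGen (fun a b => a ∈ U ∧ b ∈ U ∧ b ∈ E a) s t

/-- `U` is an end component: nonempty, δ-closed, strongly connected. -/
def IsEndComponent {S : Type*} (E : S → Set S) (SP : Set S) (U : Set S) : Prop :=
  U.Nonempty ∧ (∀ s ∈ U ∩ SP, E s ⊆ U) ∧ ∀ s ∈ U, ∀ t ∈ U, ReachIn E U s t


noncomputable def stepW {S : Type*} (SP : Set S) (δ : S → S → ℝ) (σ : List S → S → S → ℝ)
    (g : ℕ → S) (i : ℕ) : ℝ :=
  if g i ∈ SP then δ (g i) (g (i + 1))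
  else σ (List.ofFn fun j : Fin i => g j) (g i) (g (i + 1))

noncomputable def pathW {S : Type*} (SP : Set S) (δ : S → S → ℝ) (σ : List S → S → S → ℝ)
    (g : ℕ → S) (n : ℕ) : ℝ :=
  ∏ i ∈ Finset.range n, stepW SP δ σ g i

def extF {S : Type*} (n : ℕ) (f : Fin (n + 1) → S) : ℕ → S :=
  fun i => if h : i < n + 1 then f ⟨i, h⟩ else f 0

def cleanF {S : Type*} (s t : S) (N : ℕ) (g : ℕ → S) (n : ℕ) : Prop :=
  ∀ i < n, N ≤ i → g i = s → g (i + 1) ≠ t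

noncomputable def cntF {S : Type*} (s : S) (N : ℕ) (g : ℕ → S) (n : ℕ) : ℕ :=
  ((Finset.range n).filter fun i => N ≤ i ∧ g i = s).card

lemma stepW_nonneg {S : Type*} (SP : Set S) (δ : S → S → ℝ) (σ : List S → S → S → ℝ)
    (hδ0 : ∀ s t, 0 ≤ δ s t) (hσ0 : ∀ w s t, 0 ≤ σ w s t) (g : ℕ → S) (i : ℕ) :
    0 ≤ stepW SP δ σ g i := by
  unfold stepW; split_ifs
  · exact hδ0 _ _
  · exact hσ0 _ _ _

lemma pathW_nonneg {S : Type*} (SP : Set S) (δ : S → S → ℝ) (σ : List S → S → S → ℝ)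
    (hδ0 : ∀ s t, 0 ≤ δ s t) (hσ0 : ∀ w s t, 0 ≤ σ w s t) (g : ℕ → S) (n : ℕ) :
    0 ≤ pathW SP δ σ g n :=
  Finset.prod_nonneg fun i _ => stepW_nonneg SP δ σ hδ0 hσ0 g i

lemma stepW_congr {S : Type*} (SP : Set S) (δ : S → S → ℝ) (σ : List S → S → S → ℝ)
    {g g' : ℕ → S} {i : ℕ} (h : ∀ j ≤ i + 1, g j = g' j) :
    stepW SP δ σ g i = stepW SP δ σ g' i := by
  unfold stepW
  have h1 : g i = g' i := h i (Nat.le_succ i)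
  have h2 : g (i + 1) = g' (i + 1) := h (i + 1) le_rfl
  have h3 : (List.ofFn fun j : Fin i => g j) = List.ofFn fun j : Fin i => g' j := by
    congr 1; funext j; exact h j (by omega)
  rw [h1, h2, h3]

lemma pathW_congr {S : Type*} (SP : Set S) (δ : S → S → ℝ) (σ : List S → S → S → ℝ)
    {g g' : ℕ → S} {n : ℕ} (h : ∀ j ≤ n, g j = g' j) :
    pathW SP δ σ g n = pathW SP δ σ g' n := by
  unfold pathW
  refine Finset.prod_congr rfl fun i hi => ?_
  have hi' := Finset.mem_range.mp hi
  exact stepW_congr SP δ σ fun j hj => h j (by omega)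

noncomputable def psiSum {S : Type*} [Fintype S] (SP : Set S) (δ : S → S → ℝ)
    (σ : List S → S → S → ℝ) (s0 s t : S) (N k : ℕ) (n : ℕ) : ℝ :=
  ∑ f : Fin (n + 1) → S,
    if extF n f 0 = s0 ∧ cleanF s t N (extF n f) n then
      pathW SP δ σ (extF n f) n * (1 - δ s t) ^ (k - cntF s N (extF n f) n)
    else 0

lemma psi_zero {S : Type*} [Fintype S] (SP : Set S) (δ : S → S → ℝ)
    (σ : List S → S → S → ℝ) (s0 s t : S) (N k : ℕ) :
    psiSum SP δ σ s0 s t N k 0 = (1 - δ s t) ^ k := by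
  classical
  rw [psiSum, ← (Equiv.funUnique (Fin 1) S).symm.sum_comp]
  have : ∀ x : S,
      (if extF 0 ((Equiv.funUnique (Fin 1) S).symm x) 0 = s0 ∧
          cleanF s t N (extF 0 ((Equiv.funUnique (Fin 1) S).symm x)) 0 then
        pathW SP δ σ (extF 0 ((Equiv.funUnique (Fin 1) S).symm x)) 0 *
          (1 - δ s t) ^ (k - cntF s N (extF 0 ((Equiv.funUnique (Fin 1) S).symm x)) 0)
      else 0) = if x = s0 then (1 - δ s t) ^ k else 0 := by
    intro x
    have h0 : extF 0 ((Equiv.funUnique (Fin 1) S).symm x) 0 = x := rfl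
    have hcl : cleanF s t N (extF 0 ((Equiv.funUnique (Fin 1) S).symm x)) 0 := by
      intro i hi; omega
    have hw : pathW SP δ σ (extF 0 ((Equiv.funUnique (Fin 1) S).symm x)) 0 = 1 := by
      simp [pathW]
    have hc : cntF s N (extF 0 ((Equiv.funUnique (Fin 1) S).symm x)) 0 = 0 := by
      simp [cntF]
    rw [h0, hw, hc]
    by_cases hx : x = s0
    · rw [if_pos ⟨hx, hcl⟩, if_pos hx, Nat.sub_zero, one_mul]
    · rw [if_neg (fun hh => hx hh.1), if_neg hx]
  rw [Finset.sum_congr rfl fun x _ => this x, Finset.sum_ite_eq' Finset.univ s0]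
  simp

lemma psi_succ {S : Type*} [Fintype S] (S1 SP : Set S) (hpart : S1 ∪ SP = Set.univ)
    (δ : S → S → ℝ) (hδ0 : ∀ s t, 0 ≤ δ s t) (hδ1 : ∀ s ∈ SP, ∑ t, δ s t = 1)
    (σ : List S → S → S → ℝ) (hσ0 : ∀ w s t, 0 ≤ σ w s t)
    (hσ1 : ∀ w, ∀ s ∈ S1, ∑ t, σ w s t = 1)
    (s0 s t : S) (hs : s ∈ SP) (N k : ℕ) (n : ℕ) :
    psiSum SP δ σ s0 s t N k (n + 1) ≤ psiSum SP δ σ s0 s t N k n := by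
  classical
  have hp0 : 0 ≤ δ s t := hδ0 s t
  have hp1 : δ s t ≤ 1 := by
    have h := hδ1 s hs
    have := Finset.single_le_sum (f := fun u => δ s u) (fun u _ => hδ0 s u) (Finset.mem_univ t)
    linarith
  have hq0 : (0:ℝ) ≤ 1 - δ s t := by linarith
  have hq1 : (1:ℝ) - δ s t ≤ 1 := by linarith
  set q : ℝ := 1 - δ s t with hqdef
  let e : ((Fin (n + 1) → S) × S) ≃ (Fin (n + 2) → S) :=
    { toFun := fun p => Fin.snoc p.1 p.2
      invFun := fun f => (Fin.init f, f (Fin.last _))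
      left_inv := fun p => by simp
      right_inv := fun f => by simp }
  rw [psiSum, psiSum, ← Equiv.sum_comp e, Fintype.sum_prod_type]
  apply Finset.sum_le_sum
  intro g _
  simp only [e, Equiv.coe_fn_mk]
  have hagree : ∀ (x : S), ∀ j ≤ n, extF (n + 1) (Fin.snoc g x) j = extF n g j := by
    intro x j hj
    have hj1 : j < n + 1 := Nat.lt_succ_of_le hj
    have hj2 : j < n + 2 := by omega
    simp only [extF, dif_pos hj1, dif_pos hj2]
    have hcast : (⟨j, hj2⟩ : Fin (n + 2)) = Fin.castSucc ⟨j, hj1⟩ := rfl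
    rw [hcast, Fin.snoc_castSucc]
  have htop : ∀ x : S, extF (n + 1) (Fin.snoc g x) (n + 1) = x := by
    intro x
    have h2 : n + 1 < n + 2 := by omega
    simp only [extF, dif_pos h2]
    have hcast : (⟨n + 1, h2⟩ : Fin (n + 2)) = Fin.last (n + 1) := rfl
    rw [hcast, Fin.snoc_last]
  set G : ℕ → S := extF n g with hGdef
  have hW : ∀ x : S, pathW SP δ σ (extF (n + 1) (Fin.snoc g x)) (n + 1)
      = pathW SP δ σ G n *
        (if G n ∈ SP then δ (G n) x else σ (List.ofFn fun j : Fin n => G j) (G n) x) := by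
    intro x
    rw [pathW, Finset.prod_range_succ]
    congr 1
    · exact pathW_congr SP δ σ (hagree x)
    · unfold stepW
      rw [hagree x n le_rfl, htop x]
      have hh : (List.ofFn fun j : Fin n => extF (n + 1) (Fin.snoc g x) j)
          = List.ofFn fun j : Fin n => G j := by
        congr 1; funext j; exact hagree x j (le_of_lt j.isLt)
      rw [hh]
  have hclean : ∀ x : S, cleanF s t N (extF (n + 1) (Fin.snoc g x)) (n + 1)
      ↔ (cleanF s t N G n ∧ (N ≤ n → G n = s → x ≠ t)) := by
    intro x
    constructor
    · intro h
      refine ⟨fun i hi hNi hGi => ?_, fun hNn hGn => ?_⟩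
      · have h' := h i (by omega) hNi (by rw [hagree x i (le_of_lt hi)]; exact hGi)
        rwa [hagree x (i + 1) (by omega)] at h'
      · have h' := h n (by omega) hNn (by rw [hagree x n le_rfl]; exact hGn)
        rwa [htop x] at h'
    · rintro ⟨h1, h2⟩ i hi hNi hGi
      rcases Nat.lt_or_ge i n with h | h
      · rw [hagree x i (le_of_lt h)] at hGi
        have := h1 i h hNi hGi
        rwa [hagree x (i + 1) (by omega)]
      · have hin : i = n := by omega
        rw [hin] at hGi hNi ⊢
        rw [hagree x n le_rfl] at hGi
        rw [htop x]
        exact h2 hNi hGi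
  have hcnt : ∀ x : S, cntF s N (extF (n + 1) (Fin.snoc g x)) (n + 1)
      = cntF s N G n + (if N ≤ n ∧ G n = s then 1 else 0) := by
    intro x
    unfold cntF
    rw [Finset.range_add_one, Finset.filter_insert]
    have hfc : ((Finset.range n).filter fun i => N ≤ i ∧ extF (n + 1) (Fin.snoc g x) i = s)
        = (Finset.range n).filter fun i => N ≤ i ∧ G i = s := by
      refine Finset.filter_congr fun i hi => ?_
      rw [hagree x i (le_of_lt (Finset.mem_range.mp hi))]
    by_cases h : N ≤ n ∧ G n = s
    · rw [if_pos (by rw [hagree x n le_rfl]; exact h), if_pos h, hfc,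
        Finset.card_insert_of_notMem (by simp)]
    · rw [if_neg (by rw [hagree x n le_rfl]; exact h), if_neg h, hfc, add_zero]
  by_cases hc : G 0 = s0 ∧ cleanF s t N G n
  · rw [if_pos hc]
    set c : ℕ := cntF s N G n with hcdef
    by_cases hv : N ≤ n ∧ G n = s
    · -- visit to s at position n
      have hGnSP : G n ∈ SP := by rw [hv.2]; exact hs
      have hterm : ∀ x : S,
          (if extF (n + 1) (Fin.snoc g x) 0 = s0 ∧
              cleanF s t N (extF (n + 1) (Fin.snoc g x)) (n + 1) then
            pathW SP δ σ (extF (n + 1) (Fin.snoc g x)) (n + 1) *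
              q ^ (k - cntF s N (extF (n + 1) (Fin.snoc g x)) (n + 1))
          else 0)
          = if x ≠ t then pathW SP δ σ G n * q ^ (k - (c + 1)) * δ s x else 0 := by
        intro x
        have hcond : (extF (n + 1) (Fin.snoc g x) 0 = s0 ∧
            cleanF s t N (extF (n + 1) (Fin.snoc g x)) (n + 1)) ↔ x ≠ t := by
          rw [hagree x 0 (Nat.zero_le n), hclean x]
          constructor
          · rintro ⟨-, -, h2⟩; exact h2 hv.1 hv.2
          · intro hx; exact ⟨hc.1, hc.2, fun _ _ => hx⟩
        by_cases hx : x ≠ t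
        · rw [if_pos (hcond.mpr hx), if_pos hx, hW x, hcnt x, if_pos hv, if_pos hGnSP, hv.2]
          ring
        · rw [if_neg (fun hh => hx (hcond.mp hh)), if_neg hx]
      rw [Finset.sum_congr rfl fun x _ => hterm x, ← Finset.sum_filter,
        Finset.filter_ne', ← Finset.mul_sum]
      have hsum : ∑ x ∈ Finset.univ.erase t, δ s x = q := by
        have := Finset.sum_erase_add Finset.univ (fun x => δ s x) (Finset.mem_univ t)
        have h1 := hδ1 s hs
        rw [hqdef]; linarith
      rw [hsum]
      have hpW : 0 ≤ pathW SP δ σ G n := pathW_nonneg SP δ σ hδ0 hσ0 G n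
      have hpow : q ^ (k - (c + 1)) * q ≤ q ^ (k - c) := by
        rcases Nat.lt_or_ge c k with h | h
        · have h' : k - c = (k - (c + 1)) + 1 := by omega
          rw [h', pow_succ]
        · have h1 : k - c = 0 := by omega
          have h2 : k - (c + 1) = 0 := by omega
          rw [h1, h2, pow_zero, one_mul]; exact hq1
      calc pathW SP δ σ G n * q ^ (k - (c + 1)) * q
          = pathW SP δ σ G n * (q ^ (k - (c + 1)) * q) := by ring
        _ ≤ pathW SP δ σ G n * q ^ (k - c) := by
            exact mul_le_mul_of_nonneg_left hpow hpW
    · -- no countable visit at position n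
      have hterm : ∀ x : S,
          (if extF (n + 1) (Fin.snoc g x) 0 = s0 ∧
              cleanF s t N (extF (n + 1) (Fin.snoc g x)) (n + 1) then
            pathW SP δ σ (extF (n + 1) (Fin.snoc g x)) (n + 1) *
              q ^ (k - cntF s N (extF (n + 1) (Fin.snoc g x)) (n + 1))
          else 0)
          = pathW SP δ σ G n * q ^ (k - c) *
            (if G n ∈ SP then δ (G n) x else σ (List.ofFn fun j : Fin n => G j) (G n) x) := by
        intro x
        have hcond : extF (n + 1) (Fin.snoc g x) 0 = s0 ∧
            cleanF s t N (extF (n + 1) (Fin.snoc g x)) (n + 1) := by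
          rw [hagree x 0 (Nat.zero_le n), hclean x]
          exact ⟨hc.1, hc.2, fun hNn hGn => absurd ⟨hNn, hGn⟩ hv⟩
        rw [if_pos hcond, hW x, hcnt x, if_neg hv, add_zero]
        ring
      rw [Finset.sum_congr rfl fun x _ => hterm x, ← Finset.mul_sum]
      have hsum : (∑ x : S, if G n ∈ SP then δ (G n) x
          else σ (List.ofFn fun j : Fin n => G j) (G n) x) = 1 := by
        by_cases hSP : G n ∈ SP
        · simp only [if_pos hSP]; exact hδ1 _ hSP
        · simp only [if_neg hSP]
          have hmem : G n ∈ S1 ∪ SP := by rw [hpart]; exact Set.mem_univ _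
          have hS1 : G n ∈ S1 := hmem.resolve_right hSP
          exact hσ1 _ _ hS1
      rw [hsum, mul_one]
  · -- start condition / cleanliness fails
    have hterm : ∀ x : S,
        (if extF (n + 1) (Fin.snoc g x) 0 = s0 ∧
            cleanF s t N (extF (n + 1) (Fin.snoc g x)) (n + 1) then
          pathW SP δ σ (extF (n + 1) (Fin.snoc g x)) (n + 1) *
            q ^ (k - cntF s N (extF (n + 1) (Fin.snoc g x)) (n + 1))
        else 0) = 0 := by
      intro x
      rw [if_neg]
      rintro ⟨h1, h2⟩
      rw [hagree x 0 (Nat.zero_le n)] at h1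
      exact hc ⟨h1, ((hclean x).mp h2).1⟩
    rw [Finset.sum_congr rfl fun x _ => hterm x, if_neg hc]
    simp

lemma psi_le {S : Type*} [Fintype S] (S1 SP : Set S) (hpart : S1 ∪ SP = Set.univ)
    (δ : S → S → ℝ) (hδ0 : ∀ s t, 0 ≤ δ s t) (hδ1 : ∀ s ∈ SP, ∑ t, δ s t = 1)
    (σ : List S → S → S → ℝ) (hσ0 : ∀ w s t, 0 ≤ σ w s t)
    (hσ1 : ∀ w, ∀ s ∈ S1, ∑ t, σ w s t = 1)
    (s0 s t : S) (hs : s ∈ SP) (N k : ℕ) (n : ℕ) :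
    psiSum SP δ σ s0 s t N k n ≤ (1 - δ s t) ^ k := by
  induction n with
  | zero => exact le_of_eq (psi_zero SP δ σ s0 s t N k)
  | succ m ih =>
    exact le_trans (psi_succ S1 SP hpart δ hδ0 hδ1 σ hσ0 hσ1 s0 s t hs N k m) ih

lemma pathSum_le {S : Type*} [Fintype S] (S1 SP : Set S) (hpart : S1 ∪ SP = Set.univ)
    (δ : S → S → ℝ) (hδ0 : ∀ s t, 0 ≤ δ s t) (hδ1 : ∀ s ∈ SP, ∑ t, δ s t = 1)
    (σ : List S → S → S → ℝ) (hσ0 : ∀ w s t, 0 ≤ σ w s t)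
    (hσ1 : ∀ w, ∀ s ∈ S1, ∑ t, σ w s t = 1)
    (s0 s t : S) (hs : s ∈ SP) (N k : ℕ) (n : ℕ) :
    (∑ f : Fin (n + 1) → S,
      if extF n f 0 = s0 ∧ cleanF s t N (extF n f) n ∧ k ≤ cntF s N (extF n f) n then
        pathW SP δ σ (extF n f) n
      else 0) ≤ (1 - δ s t) ^ k := by
  classical
  refine le_trans (Finset.sum_le_sum ?_)
    (psi_le S1 SP hpart δ hδ0 hδ1 σ hσ0 hσ1 s0 s t hs N k n)
  intro f _
  have hp1 : δ s t ≤ 1 := by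
    have h := hδ1 s hs
    have := Finset.single_le_sum (f := fun u => δ s u) (fun u _ => hδ0 s u) (Finset.mem_univ t)
    linarith
  have hq0 : (0:ℝ) ≤ 1 - δ s t := by linarith
  by_cases h : extF n f 0 = s0 ∧ cleanF s t N (extF n f) n ∧ k ≤ cntF s N (extF n f) n
  · rw [if_pos h, if_pos ⟨h.1, h.2.1⟩]
    have hz : k - cntF s N (extF n f) n = 0 := by omega
    rw [hz, pow_zero, mul_one]
  · rw [if_neg h]
    split_ifs with h'
    · exact mul_nonneg (pathW_nonneg SP δ σ hδ0 hσ0 _ n) (pow_nonneg hq0 _)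
    · exact le_rfl

/-- Lemma 1: in a finite MDP, for every start state `s` and every
strategy `σ`, with probability 1 the set of states visited infinitely often is an end
component. The path measure `μ s` induced by the strategy `σ` and the transition
function `δ` is characterized by its cylinder probabilities. -/
theorem infOcc_is_endComponent {S : Type*} [Fintype S] [Nonempty S]
    [MeasurableSpace S] [MeasurableSingletonClass S]
    (E : S → Set S) (S1 SP : Set S)
    (hpart : S1 ∪ SP = Set.univ) (hdisj : Disjoint S1 SP)
    (hE : ∀ s, (E s).Nonempty)
    (δ : S → S → ℝ) (hδ0 : ∀ s t, 0 ≤ δ s t)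
    (hδE : ∀ s ∈ SP, ∀ t, 0 < δ s t ↔ t ∈ E s)
    (hδ1 : ∀ s ∈ SP, ∑ t, δ s t = 1)
    (σ : List S → S → S → ℝ) (hσ0 : ∀ w s t, 0 ≤ σ w s t)
    (hσ1 : ∀ w, ∀ s ∈ S1, ∑ t, σ w s t = 1)
    (hσE : ∀ w, ∀ s ∈ S1, ∀ t, 0 < σ w s t → t ∈ E s)
    (μ : S → Measure (ℕ → S)) (hprob : ∀ s, IsProbabilityMeasure (μ s))
    (hcyl : ∀ (s : S) (n : ℕ) (path : ℕ → S),
      μ s {ω | ∀ i ≤ n, ω i = path i} =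
        if path 0 = s then
          ENNReal.ofReal (∏ i ∈ Finset.range n,
            (if path i ∈ SP then δ (path i) (path (i + 1))
             else σ (List.ofFn fun j : Fin i => path j) (path i) (path (i + 1))))
        else 0) :
    ∀ s : S, μ s {ω | IsEndComponent E SP (InfOcc ω)} = 1 := by
  classical
  intro st
  haveI := hprob st
  -- cylinder measure in terms of pathW
  have hμcyl : ∀ (n : ℕ) (f : Fin (n + 1) → S),
      μ st {ω | ∀ i ≤ n, ω i = extF n f i} =
        if extF n f 0 = st then ENNReal.ofReal (pathW SP δ σ (extF n f) n) else 0 := by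
    intro n f
    rw [hcyl st n (extF n f)]
    rfl
  -- restriction of ω agrees with extF
  have hres : ∀ (n : ℕ) (ω : ℕ → S) (i : ℕ), i ≤ n →
      extF n (fun j : Fin (n + 1) => ω j) i = ω i := by
    intro n ω i hi
    have h1 : i < n + 1 := by omega
    simp only [extF, dif_pos h1]
  -- non-edge pairs are null
  have hbadpair : ∀ (n : ℕ) (a b : S), b ∉ E a →
      μ st {ω : ℕ → S | ω n = a ∧ ω (n + 1) = b} = 0 := by
    intro n a b hb
    have hsub : {ω : ℕ → S | ω n = a ∧ ω (n + 1) = b} ⊆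
        ⋃ f ∈ Finset.univ.filter (fun f : Fin (n + 2) → S =>
          extF (n + 1) f n = a ∧ extF (n + 1) f (n + 1) = b),
          {ω : ℕ → S | ∀ i ≤ n + 1, ω i = extF (n + 1) f i} := by
      intro ω hω
      refine Set.mem_iUnion₂.mpr ⟨fun j : Fin (n + 2) => ω j, ?_, ?_⟩
      · refine Finset.mem_filter.mpr ⟨Finset.mem_univ _, ?_, ?_⟩
        · rw [hres (n + 1) ω n (by omega)]; exact hω.1
        · rw [hres (n + 1) ω (n + 1) le_rfl]; exact hω.2
      · intro i hi
        rw [hres (n + 1) ω i hi]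
    refine le_antisymm (le_trans (measure_mono hsub)
      (le_trans (measure_biUnion_finset_le _ _) ?_)) zero_le'
    rw [Finset.sum_eq_zero]
    intro f hf
    obtain ⟨-, hfa, hfb⟩ := Finset.mem_filter.mp hf
    rw [hμcyl (n + 1) f]
    split_ifs with h0
    · have hzero : stepW SP δ σ (extF (n + 1) f) n = 0 := by
        unfold stepW
        rw [hfa, hfb]
        split_ifs with ha
        · have h1 : ¬ 0 < δ a b := fun h => hb ((hδE a ha b).mp h)
          linarith [hδ0 a b]
        · have hmem : a ∈ S1 ∪ SP := by rw [hpart]; exact Set.mem_univ _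
          have hS1 : a ∈ S1 := hmem.resolve_right ha
          have h1 : ¬ 0 < σ (List.ofFn fun j : Fin n => extF (n + 1) f j) a b :=
            fun h => hb (hσE _ a hS1 b h)
          linarith [hσ0 (List.ofFn fun j : Fin n => extF (n + 1) f j) a b]
      have hW0 : pathW SP δ σ (extF (n + 1) f) (n + 1) = 0 :=
        Finset.prod_eq_zero (Finset.mem_range.mpr (by omega)) hzero
      rw [hW0, ENNReal.ofReal_zero]
    · rfl
  -- the key null sets B(a, b, N)
  have hbadB : ∀ (a b : S), a ∈ SP → b ∈ E a → ∀ N : ℕ,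
      μ st {ω : ℕ → S | {n | ω n = a}.Infinite ∧
        ∀ n, N ≤ n → ω n = a → ω (n + 1) ≠ b} = 0 := by
    intro a b ha hb N
    have hp : 0 < δ a b := (hδE a ha b).mpr hb
    have hp1 : δ a b ≤ 1 := by
      have h := hδ1 a ha
      have := Finset.single_le_sum (f := fun u => δ a u) (fun u _ => hδ0 a u) (Finset.mem_univ b)
      linarith
    have hq0 : (0:ℝ) ≤ 1 - δ a b := by linarith
    have hq1 : (1:ℝ) - δ a b < 1 := by linarith
    have key : ∀ k : ℕ,
        μ st {ω : ℕ → S | {n | ω n = a}.Infinite ∧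
          ∀ n, N ≤ n → ω n = a → ω (n + 1) ≠ b} ≤ ENNReal.ofReal ((1 - δ a b) ^ k) := by
      intro k
      set F : ℕ → Set (ℕ → S) := fun n =>
        {ω | (∀ i, N ≤ i → ω i = a → ω (i + 1) ≠ b) ∧
          k ≤ ((Finset.range n).filter fun i => N ≤ i ∧ ω i = a).card} with hFdef
      have hmono : Monotone F := by
        intro m n hmn ω hω
        exact ⟨hω.1, le_trans hω.2 (Finset.card_le_card
          (Finset.filter_subset_filter _ (Finset.range_subset_range.mpr hmn)))⟩
      have hsubU : {ω : ℕ → S | {n | ω n = a}.Infinite ∧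
          ∀ n, N ≤ n → ω n = a → ω (n + 1) ≠ b} ⊆ ⋃ n, F n := by
        intro ω hω
        have hV : ({n | ω n = a} \ {n | n < N}).Infinite :=
          hω.1.diff (Set.finite_lt_nat N)
        set e := hV.natEmbedding with hedef
        set n : ℕ := ((Finset.range k).sup fun i => ((e i : ℕ))) + 1 with hndef
        refine Set.mem_iUnion.mpr ⟨n, ⟨hω.2, ?_⟩⟩
        have hinj : Function.Injective fun i : ℕ => ((e i : ℕ)) := by
          intro i j h
          exact e.injective (Subtype.ext h)
        have himage : (Finset.range k).image (fun i => ((e i : ℕ))) ⊆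
            (Finset.range n).filter fun i => N ≤ i ∧ ω i = a := by
          intro m hm
          obtain ⟨i, hik, hie⟩ := Finset.mem_image.mp hm
          have hie' : ((e i : ℕ)) = m := hie
          refine Finset.mem_filter.mpr ⟨Finset.mem_range.mpr ?_, ?_, ?_⟩
          · rw [hndef]
            have hle : ((e i : ℕ)) ≤ (Finset.range k).sup fun i : ℕ => ((e i : ℕ)) :=
              Finset.le_sup (f := fun i : ℕ => ((e i : ℕ))) hik
            omega
          · have := (e i).2
            have h2 : ¬ ((e i : ℕ) < N) := this.2
            omega
          · have := (e i).2
            rw [← hie]; exact this.1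
        calc k = ((Finset.range k).image fun i => ((e i : ℕ))).card := by
              rw [Finset.card_image_of_injective _ hinj, Finset.card_range]
          _ ≤ _ := Finset.card_le_card himage
      refine le_trans (measure_mono hsubU) ?_
      rw [hmono.measure_iUnion]
      refine iSup_le fun n => ?_
      have hsub2 : F n ⊆ ⋃ f ∈ Finset.univ.filter (fun f : Fin (n + 1) → S =>
          cleanF a b N (extF n f) n ∧ k ≤ cntF a N (extF n f) n),
          {ω : ℕ → S | ∀ i ≤ n, ω i = extF n f i} := by
        intro ω hω
        refine Set.mem_iUnion₂.mpr ⟨fun j : Fin (n + 1) => ω j, ?_, ?_⟩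
        · refine Finset.mem_filter.mpr ⟨Finset.mem_univ _, ?_, ?_⟩
          · intro i hi hNi hia
            rw [hres n ω i (le_of_lt hi)] at hia
            rw [hres n ω (i + 1) (by omega)]
            exact hω.1 i hNi hia
          · refine le_trans hω.2 (le_of_eq ?_)
            unfold cntF
            congr 1
            refine Finset.filter_congr fun i hi => ?_
            rw [hres n ω i (le_of_lt (Finset.mem_range.mp hi))]
        · intro i hi
          rw [hres n ω i hi]
      refine le_trans (measure_mono hsub2) (le_trans (measure_biUnion_finset_le _ _) ?_)
      have hstep1 : ∀ f ∈ Finset.univ.filter (fun f : Fin (n + 1) → S =>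
          cleanF a b N (extF n f) n ∧ k ≤ cntF a N (extF n f) n),
          μ st {ω : ℕ → S | ∀ i ≤ n, ω i = extF n f i} =
            ENNReal.ofReal (if extF n f 0 = st then pathW SP δ σ (extF n f) n else 0) := by
        intro f _
        rw [hμcyl n f]
        split_ifs
        · rfl
        · rw [ENNReal.ofReal_zero]
      rw [Finset.sum_congr rfl hstep1, ← ENNReal.ofReal_sum_of_nonneg]
      · refine ENNReal.ofReal_le_ofReal ?_
        have hrw : (∑ f ∈ Finset.univ.filter (fun f : Fin (n + 1) → S =>
            cleanF a b N (extF n f) n ∧ k ≤ cntF a N (extF n f) n),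
            if extF n f 0 = st then pathW SP δ σ (extF n f) n else 0)
            = ∑ f : Fin (n + 1) → S,
              if extF n f 0 = st ∧ cleanF a b N (extF n f) n ∧ k ≤ cntF a N (extF n f) n then
                pathW SP δ σ (extF n f) n
              else 0 := by
          rw [Finset.sum_filter]
          refine Finset.sum_congr rfl fun f _ => ?_
          split_ifs with h1 h2 h2 <;> tauto
        rw [hrw]
        exact pathSum_le S1 SP hpart δ hδ0 hδ1 σ hσ0 hσ1 st a b ha N k n
      · intro f _
        split_ifs
        · exact pathW_nonneg SP δ σ hδ0 hσ0 _ n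
        · exact le_rfl
    have hlim : Filter.Tendsto (fun k : ℕ => ENNReal.ofReal ((1 - δ a b) ^ k))
        Filter.atTop (nhds 0) := by
      rw [← ENNReal.ofReal_zero]
      exact (ENNReal.continuous_ofReal.tendsto 0).comp
        (tendsto_pow_atTop_nhds_zero_of_lt_one hq0 hq1)
    exact le_antisymm (le_of_tendsto_of_tendsto' tendsto_const_nhds hlim key) zero_le'
  -- bad sets
  set Bad1 : Set (ℕ → S) := ⋃ n : ℕ, {ω : ℕ → S | ω (n + 1) ∉ E (ω n)} with hBad1def
  have hBad1 : μ st Bad1 = 0 := by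
    refine le_antisymm (le_trans (measure_iUnion_le _) ?_) zero_le'
    have hz : ∀ n : ℕ, μ st {ω : ℕ → S | ω (n + 1) ∉ E (ω n)} = 0 := by
      intro n
      have hsub : {ω : ℕ → S | ω (n + 1) ∉ E (ω n)} ⊆
          ⋃ p : S × S, {ω : ℕ → S | p.2 ∉ E p.1 ∧ ω n = p.1 ∧ ω (n + 1) = p.2} :=
        fun ω hω => Set.mem_iUnion.mpr ⟨(ω n, ω (n + 1)), hω, rfl, rfl⟩
      refine le_antisymm (le_trans (measure_mono hsub)
        (le_trans (measure_iUnion_le _) ?_)) zero_le'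
      have h0 : ∀ p : S × S,
          μ st {ω : ℕ → S | p.2 ∉ E p.1 ∧ ω n = p.1 ∧ ω (n + 1) = p.2} = 0 := by
        intro p
        by_cases hp : p.2 ∈ E p.1
        · have : {ω : ℕ → S | p.2 ∉ E p.1 ∧ ω n = p.1 ∧ ω (n + 1) = p.2} = ∅ := by
            ext ω; simp [hp]
          rw [this, measure_empty]
        · have hbp := hbadpair n p.1 p.2 hp
          refine le_antisymm (le_trans (measure_mono ?_) (le_of_eq hbp)) zero_le'
          exact fun ω hω => ⟨hω.2.1, hω.2.2⟩
      rw [tsum_congr h0, tsum_zero]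
    rw [tsum_congr hz, tsum_zero]
  set Bad2 : Set (ℕ → S) := ⋃ p : S × S × ℕ,
    {ω : ℕ → S | p.1 ∈ SP ∧ p.2.1 ∈ E p.1 ∧ {n | ω n = p.1}.Infinite ∧
      ∀ n, p.2.2 ≤ n → ω n = p.1 → ω (n + 1) ≠ p.2.1} with hBad2def
  have hBad2 : μ st Bad2 = 0 := by
    refine le_antisymm (le_trans (measure_iUnion_le _) ?_) zero_le'
    have hz : ∀ p : S × S × ℕ,
        μ st {ω : ℕ → S | p.1 ∈ SP ∧ p.2.1 ∈ E p.1 ∧ {n | ω n = p.1}.Infinite ∧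
          ∀ n, p.2.2 ≤ n → ω n = p.1 → ω (n + 1) ≠ p.2.1} = 0 := by
      intro p
      by_cases hp : p.1 ∈ SP ∧ p.2.1 ∈ E p.1
      · have hbb := hbadB p.1 p.2.1 hp.1 hp.2 p.2.2
        refine le_antisymm (le_trans (measure_mono ?_) (le_of_eq hbb)) zero_le'
        exact fun ω hω => ⟨hω.2.2.1, hω.2.2.2⟩
      · have : {ω : ℕ → S | p.1 ∈ SP ∧ p.2.1 ∈ E p.1 ∧ {n | ω n = p.1}.Infinite ∧
            ∀ n, p.2.2 ≤ n → ω n = p.1 → ω (n + 1) ≠ p.2.1} = ∅ := by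
          ext ω
          simp only [Set.mem_setOf_eq, Set.mem_empty_iff_false, iff_false]
          rintro ⟨h1, h2, -⟩
          exact hp ⟨h1, h2⟩
        rw [this, measure_empty]
    rw [tsum_congr hz, tsum_zero]
  -- pointwise: outside the bad sets the infinitely-occurring set is an end component
  have hgood : ∀ ω : ℕ → S, ω ∉ Bad1 → ω ∉ Bad2 → IsEndComponent E SP (InfOcc ω) := by
    intro ω h1 h2
    have hedge : ∀ n : ℕ, ω (n + 1) ∈ E (ω n) := by
      intro n
      by_contra hn
      exact h1 (Set.mem_iUnion.mpr ⟨n, hn⟩)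
    have hclosed : ∀ a ∈ InfOcc ω ∩ SP, E a ⊆ InfOcc ω := by
      rintro a ⟨hainf, haSP⟩ b hbE
      refine Set.infinite_of_forall_exists_gt fun m => ?_
      have hnot : ¬ (a ∈ SP ∧ b ∈ E a ∧ {n | ω n = a}.Infinite ∧
          ∀ n, m + 1 ≤ n → ω n = a → ω (n + 1) ≠ b) :=
        fun hmem => h2 (Set.mem_iUnion.mpr ⟨(a, b, m + 1), hmem⟩)
      push_neg at hnot
      obtain ⟨n, hn1, hn2, hn3⟩ := hnot haSP hbE hainf
      exact ⟨n + 1, hn3, by omega⟩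
    have hne : (InfOcc ω).Nonempty := by
      by_contra hemp
      have hall : ∀ x : S, {n | ω n = x}.Finite := by
        intro x
        by_contra hx
        exact hemp ⟨x, hx⟩
      have huniv : (Set.univ : Set ℕ) = ⋃ x : S, {n | ω n = x} := by
        ext n; simp
      have hfin : (Set.univ : Set ℕ).Finite := by
        rw [huniv]; exact Set.finite_iUnion hall
      exact Set.infinite_univ hfin
    have hfin : {n | ω n ∉ InfOcc ω}.Finite := by
      have hsub : {n | ω n ∉ InfOcc ω} ⊆
          ⋃ x ∈ {x : S | x ∉ InfOcc ω}, {n | ω n = x} :=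
        fun n hn => Set.mem_biUnion hn rfl
      refine Set.Finite.subset (Set.Finite.biUnion (Set.toFinite _) ?_) hsub
      intro x hx
      exact Set.not_infinite.mp hx
    obtain ⟨N, hN⟩ : ∃ N : ℕ, ∀ n, N ≤ n → ω n ∈ InfOcc ω := by
      obtain ⟨N, hN⟩ := hfin.bddAbove
      refine ⟨N + 1, fun n hn => ?_⟩
      by_contra hc
      have := hN hc
      omega
    have hchain : ∀ n, N ≤ n → ∀ d : ℕ, ReachIn E (InfOcc ω) (ω n) (ω (n + d)) := by
      intro n hn d
      induction d with
      | zero => exact Relation.ReflTransGen.refl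
      | succ m ih =>
        exact Relation.ReflTransGen.tail ih
          ⟨hN _ (by omega), hN _ (by omega), hedge _⟩
    refine ⟨hne, hclosed, ?_⟩
    intro x hx y hy
    obtain ⟨n, hn1, hn2⟩ := Set.Infinite.exists_gt hx N
    obtain ⟨m, hm1, hm2⟩ := Set.Infinite.exists_gt hy n
    have hr := hchain n (by omega) (m - n)
    rw [show n + (m - n) = m by omega] at hr
    rw [← hn1, ← hm1]
    exact hr
  -- conclude
  have hcompl : {ω : ℕ → S | IsEndComponent E SP (InfOcc ω)}ᶜ ⊆ Bad1 ∪ Bad2 := by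
    intro ω hω
    by_contra hc
    exact hω (hgood ω (fun h => hc (Or.inl h)) (fun h => hc (Or.inr h)))
  refine le_antisymm prob_le_one ?_
  have huniv : (Set.univ : Set (ℕ → S)) ⊆
      {ω : ℕ → S | IsEndComponent E SP (InfOcc ω)} ∪ (Bad1 ∪ Bad2) := by
    intro ω _
    by_cases h : IsEndComponent E SP (InfOcc ω)
    · exact Or.inl h
    · exact Or.inr (hcompl h)
  calc (1:ENNReal) = μ st Set.univ := measure_univ.symm
    _ ≤ μ st ({ω : ℕ → S | IsEndComponent E SP (InfOcc ω)} ∪ (Bad1 ∪ Bad2)) :=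
        measure_mono huniv
    _ ≤ μ st {ω : ℕ → S | IsEndComponent E SP (InfOcc ω)} + μ st (Bad1 ∪ Bad2) :=
        measure_union_le _ _
    _ ≤ μ st {ω : ℕ → S | IsEndComponent E SP (InfOcc ω)} + (μ st Bad1 + μ st Bad2) := by
        gcongr
        exact measure_union_le _ _
    _ = μ st {ω : ℕ → S | IsEndComponent E SP (InfOcc ω)} := by
        rw [hBad1, hBad2]; simp
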